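/- arXiv:math/0203214 — 2 statements merged into one kernel-verified Lean document; each statement's English description precedes it below -/
import Mathlib

section
/- The supremum $V = \sup \{ \int_0^\infty [-2h y'(h)^2 - h y(h)^2]\,dh : y \in L^2[0,\infty) \cap C^2[0,\infty),\ \|y\|_{L^2} = 1 \}$ equals $-\sqrt{2}$, attained by $y^*(h) = \frac{1}{\sqrt{2}} e^{-h/\sqrt{2}}$. -/
open MeasureTheory Set Filter

private lemma tendsto_mul_exp_neg (c : ℝ) (hc : 0 < c) :
    Tendsto (fun x : ℝ => x * Real.exp (-(c * x))) atTop (nhds 0) := by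
  have h1 : Tendsto (fun x : ℝ => c * x) atTop atTop :=
    Tendsto.const_mul_atTop hc tendsto_id
  have h2 := (Real.tendsto_pow_mul_exp_neg_atTop_nhds_zero 1).comp h1
  have h3 := h2.const_mul (1 / c)
  rw [mul_zero] at h3
  refine h3.congr fun x => ?_
  simp only [Function.comp_apply, pow_one]
  field_simp

private lemma integrable_mul_exp_neg (c : ℝ) (hc : 0 < c) :
    IntegrableOn (fun x : ℝ => x * Real.exp (-(c * x))) (Ioi 0) := by
  have hderiv : ∀ x ∈ Ici (0:ℝ),
      HasDerivAt (fun x : ℝ => -((x / c + 1 / c ^ 2) * Real.exp (-(c * x))))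
        (x * Real.exp (-(c * x))) x := by
    intro x _
    have he : HasDerivAt (fun x : ℝ => Real.exp (-(c * x))) (-c * Real.exp (-(c * x))) x := by
      have := (Real.hasDerivAt_exp (-(c * x))).comp x
        (((hasDerivAt_id x).const_mul c).neg)
      simpa [mul_comm, Function.comp_def, Pi.neg_def] using this
    have h1 : HasDerivAt (fun x : ℝ => x / c + 1 / c ^ 2) (1 / c) x := by
      have := ((hasDerivAt_id x).div_const c).add_const (1 / c ^ 2)
      simp only [one_div] at this ⊢
      simpa using this
    have := (h1.mul he).neg
    refine this.congr_deriv ?_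
    field_simp
    ring
  have htend : Tendsto (fun x : ℝ => -((x / c + 1 / c ^ 2) * Real.exp (-(c * x))))
      atTop (nhds 0) := by
    have h1 := (tendsto_mul_exp_neg c hc).const_mul (1 / c)
    have h2 := (Real.tendsto_exp_comp_nhds_zero (f := fun x : ℝ => -(c * x))).mpr
      (tendsto_neg_atBot_iff.mpr (Tendsto.const_mul_atTop hc tendsto_id))
    have h3 := h2.const_mul (1 / c ^ 2)
    have := ((h1.add h3).neg)
    simp only [mul_zero, add_zero, neg_zero] at this
    refine this.congr fun x => ?_
    field_simp
  exact integrableOn_Ioi_deriv_of_nonneg' hderiv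
    (fun x hx => mul_nonneg (le_of_lt hx) (Real.exp_pos _).le) htend

private lemma integral_mul_exp_neg (c : ℝ) (hc : 0 < c) :
    ∫ x in Ioi (0:ℝ), x * Real.exp (-(c * x)) = 1 / c ^ 2 := by
  have hderiv : ∀ x ∈ Ici (0:ℝ),
      HasDerivAt (fun x : ℝ => -((x / c + 1 / c ^ 2) * Real.exp (-(c * x))))
        (x * Real.exp (-(c * x))) x := by
    intro x _
    have he : HasDerivAt (fun x : ℝ => Real.exp (-(c * x))) (-c * Real.exp (-(c * x))) x := by
      have := (Real.hasDerivAt_exp (-(c * x))).comp x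
        (((hasDerivAt_id x).const_mul c).neg)
      simpa [mul_comm, Function.comp_def, Pi.neg_def] using this
    have h1 : HasDerivAt (fun x : ℝ => x / c + 1 / c ^ 2) (1 / c) x := by
      have := ((hasDerivAt_id x).div_const c).add_const (1 / c ^ 2)
      simp only [one_div] at this ⊢
      simpa using this
    have := (h1.mul he).neg
    refine this.congr_deriv ?_
    field_simp
    ring
  have htend : Tendsto (fun x : ℝ => -((x / c + 1 / c ^ 2) * Real.exp (-(c * x))))
      atTop (nhds 0) := by
    have h1 := (tendsto_mul_exp_neg c hc).const_mul (1 / c)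
    have h2 := (Real.tendsto_exp_comp_nhds_zero (f := fun x : ℝ => -(c * x))).mpr
      (tendsto_neg_atBot_iff.mpr (Tendsto.const_mul_atTop hc tendsto_id))
    have h3 := h2.const_mul (1 / c ^ 2)
    have := ((h1.add h3).neg)
    simp only [mul_zero, add_zero, neg_zero] at this
    refine this.congr fun x => ?_
    field_simp
  have := integral_Ioi_of_hasDerivAt_of_tendsto' hderiv
    (integrable_mul_exp_neg c hc) htend
  rw [this]
  simp

private lemma integral_exp_neg_mul (c : ℝ) (hc : 0 < c) :
    ∫ x in Ioi (0:ℝ), Real.exp (-(c * x)) = 1 / c := by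
  have hderiv : ∀ x ∈ Ici (0:ℝ),
      HasDerivAt (fun x : ℝ => -(Real.exp (-(c * x)) / c)) (Real.exp (-(c * x))) x := by
    intro x _
    have he : HasDerivAt (fun x : ℝ => Real.exp (-(c * x))) (-c * Real.exp (-(c * x))) x := by
      have := (Real.hasDerivAt_exp (-(c * x))).comp x
        (((hasDerivAt_id x).const_mul c).neg)
      simpa [mul_comm, Function.comp_def, Pi.neg_def] using this
    have := (he.div_const c).neg
    refine this.congr_deriv ?_
    field_simp
  have htend : Tendsto (fun x : ℝ => -(Real.exp (-(c * x)) / c)) atTop (nhds 0) := by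
    have h2 := (Real.tendsto_exp_comp_nhds_zero (f := fun x : ℝ => -(c * x))).mpr
      (tendsto_neg_atBot_iff.mpr (Tendsto.const_mul_atTop hc tendsto_id))
    have := (h2.div_const c).neg
    simpa using this
  have := integral_Ioi_of_hasDerivAt_of_tendsto' hderiv
    (by simpa [neg_mul] using exp_neg_integrableOn_Ioi 0 hc) htend
  rw [this]
  simp

/-- The variational problem `V = sup { ∫_0^∞ [-2h y'(h)² - h y(h)²] dh : ‖y‖₂ = 1 }`
has value `-√2`, attained by `y*(h) = (1/√2) e^{-h/√2}`. -/
theorem stmt3 :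
    IsGreatest {V : ℝ | ∃ y : ℝ → ℝ, ContDiff ℝ 2 y ∧
      IntegrableOn (fun h => (y h) ^ 2) (Ioi 0) ∧
      (∫ h in Ioi (0:ℝ), (y h) ^ 2) = 1 ∧
      IntegrableOn (fun h => -2 * h * (deriv y h) ^ 2 - h * (y h) ^ 2) (Ioi 0) ∧
      IntegrableOn (fun h => h * y h * deriv y h) (Ioi 0) ∧
      Tendsto (fun h => h * (y h) ^ 2) atTop (nhds 0) ∧
      V = ∫ h in Ioi (0:ℝ), (-2 * h * (deriv y h) ^ 2 - h * (y h) ^ 2)}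
    (-Real.sqrt 2) := by
  set s := Real.sqrt 2 with hs_def
  have hs2 : s ^ 2 = 2 := Real.sq_sqrt (by norm_num)
  have hs_pos : 0 < s := Real.sqrt_pos.mpr (by norm_num)
  have hs0 : s ≠ 0 := ne_of_gt hs_pos
  constructor
  · -- membership: witness y h = √s · exp(-(s/2)·h)
    set y : ℝ → ℝ := fun h => Real.sqrt s * Real.exp (-(s / 2 * h)) with hy_def
    have hyd : ∀ x : ℝ, HasDerivAt y (-(s / 2) * y x) x := by
      intro x
      have he : HasDerivAt (fun x : ℝ => Real.exp (-(s / 2 * x)))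
          (-(s / 2) * Real.exp (-(s / 2 * x))) x := by
        have := (Real.hasDerivAt_exp (-(s / 2 * x))).comp x
          (((hasDerivAt_id x).const_mul (s / 2)).neg)
        simpa [mul_comm, Function.comp_def, Pi.neg_def] using this
      have := he.const_mul (Real.sqrt s)
      refine this.congr_deriv ?_
      simp [hy_def]; ring
    have hderiv_eq : deriv y = fun x => -(s / 2) * y x := funext fun x => (hyd x).deriv
    have hy2 : ∀ x : ℝ, y x ^ 2 = s * Real.exp (-(s * x)) := by
      intro x
      have : Real.sqrt s ^ 2 = s := Real.sq_sqrt hs_pos.le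
      simp only [hy_def]
      rw [mul_pow, this, ← Real.exp_nat_mul]
      congr 2
      ring
    refine ⟨y, ?_, ?_, ?_, ?_, ?_, ?_, ?_⟩
    · -- ContDiff
      exact contDiff_const.mul (Real.contDiff_exp.comp ((contDiff_const.mul contDiff_id).neg))
    · -- IntegrableOn y²
      have hbase : IntegrableOn (fun x => s * Real.exp (-(s * x))) (Ioi 0) := by
        have := (exp_neg_integrableOn_Ioi (0:ℝ) hs_pos).const_mul s
        simpa [neg_mul, IntegrableOn] using this
      exact IntegrableOn.congr_fun hbase (fun x _ => (hy2 x).symm) measurableSet_Ioi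
    · -- ∫ y² = 1
      have h1 : (∫ h in Ioi (0:ℝ), (y h) ^ 2) = ∫ h in Ioi (0:ℝ), s * Real.exp (-(s * h)) := by
        refine setIntegral_congr_fun measurableSet_Ioi fun x _ => hy2 x
      rw [h1, integral_const_mul, integral_exp_neg_mul s hs_pos]
      field_simp
    · -- IntegrableOn the objective integrand
      have h2 : ∀ x : ℝ, -2 * x * (deriv y x) ^ 2 - x * (y x) ^ 2
          = (-2 * s) * (x * Real.exp (-(s * x))) := by
        intro x
        rw [hderiv_eq]
        simp only
        have hL : -2*x*(-(s/2)* y x)^2 - x * y x ^ 2 = -2 * x * (y x ^ 2) := by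
          linear_combination (-(x * y x ^ 2) / 2) * hs2
        rw [hL, hy2 x]; ring
      have hbase := (integrable_mul_exp_neg s hs_pos).const_mul (-2 * s)
      exact IntegrableOn.congr_fun hbase (fun x _ => (h2 x).symm) measurableSet_Ioi
    · -- IntegrableOn h y y'
      have h2 : ∀ x : ℝ, x * y x * deriv y x = (-(s / 2) * s) * (x * Real.exp (-(s * x))) := by
        intro x
        rw [hderiv_eq]
        simp only
        have hL : x * y x * (-(s/2) * y x) = -(s/2) * (x * y x ^ 2) := by ring
        rw [hL, hy2 x]; ring
      have hbase := (integrable_mul_exp_neg s hs_pos).const_mul (-(s / 2) * s)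
      exact IntegrableOn.congr_fun hbase (fun x _ => (h2 x).symm) measurableSet_Ioi
    · -- Tendsto h y² → 0
      have := (tendsto_mul_exp_neg s hs_pos).const_mul s
      rw [mul_zero] at this
      refine this.congr fun x => ?_
      rw [hy2 x]; ring
    · -- value
      have h1 : (∫ h in Ioi (0:ℝ), (-2 * h * (deriv y h) ^ 2 - h * (y h) ^ 2))
          = ∫ h in Ioi (0:ℝ), (-2 * s) * (h * Real.exp (-(s * h))) := by
        refine setIntegral_congr_fun measurableSet_Ioi fun x _ => ?_
        rw [hderiv_eq]
        simp only
        have hL : -2*x*(-(s/2)* y x)^2 - x * y x ^ 2 = -2 * x * (y x ^ 2) := by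
          linear_combination (-(x * y x ^ 2) / 2) * hs2
        rw [hL, hy2 x]; ring
      rw [h1, integral_const_mul, integral_mul_exp_neg s hs_pos]
      rw [hs2]
      ring
  · -- upper bound
    rintro V ⟨y, hy, hI2, hnorm, hIg, hIc, htend, rfl⟩
    have hdy : Differentiable ℝ y := hy.differentiable (by norm_num)
    set d := deriv y with hd_def
    -- integration by parts: ∫ (y² + 2 h y y') = 0
    have hparts : ∀ x ∈ Ioi (0:ℝ), HasDerivAt (fun x => x * y x ^ 2)
        (y x ^ 2 + 2 * (x * y x * d x)) x := by
      intro x _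
      have h1 : HasDerivAt (fun x => y x ^ 2) (2 * y x ^ 1 * d x) x :=
        ((hdy x).hasDerivAt).pow 2
      have := (hasDerivAt_id x).mul h1
      refine this.congr_deriv ?_
      simp; ring
    have hIsum : IntegrableOn (fun x => y x ^ 2 + 2 * (x * y x * d x)) (Ioi 0) :=
      hI2.add (hIc.const_mul 2)
    have hcont : ContinuousWithinAt (fun x => x * y x ^ 2) (Ici (0:ℝ)) 0 :=
      (continuous_id.mul (hy.continuous.pow 2)).continuousWithinAt
    have hparts_int : ∫ x in Ioi (0:ℝ), (y x ^ 2 + 2 * (x * y x * d x)) = 0 := by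
      have := integral_Ioi_of_hasDerivAt_of_tendsto hcont hparts hIsum htend
      simpa using this
    have hsplit : (∫ x in Ioi (0:ℝ), (y x ^ 2 + 2 * (x * y x * d x)))
        = (∫ x in Ioi (0:ℝ), y x ^ 2) + ∫ x in Ioi (0:ℝ), 2 * (x * y x * d x) :=
      integral_add hI2 (hIc.const_mul 2)
    have hcross : ∫ x in Ioi (0:ℝ), (x * y x * d x) = -(1/2) := by
      have h2 : ∫ x in Ioi (0:ℝ), 2 * (x * y x * d x)
          = 2 * ∫ x in Ioi (0:ℝ), (x * y x * d x) := integral_const_mul 2 _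
      rw [hsplit, hnorm, h2] at hparts_int
      linarith
    -- completing the square
    have key : ∀ x : ℝ, -2 * x * (d x) ^ 2 - x * (y x) ^ 2
        = -(2 * x * (d x + y x / s) ^ 2) + 2 * s * (x * y x * d x) := by
      intro x
      field_simp
      linear_combination (-(x * y x ^ 2) - 2 * s * x * y x * d x) * hs2
    have hIsq : IntegrableOn (fun x => -(2 * x * (d x + y x / s) ^ 2)) (Ioi 0) := by
      have := hIg.sub (hIc.const_mul (2 * s))
      exact IntegrableOn.congr_fun this
        (fun x _ => by simp only [Pi.sub_apply]; rw [key x]; ring) measurableSet_Ioi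
    have hsq_nonpos : ∫ x in Ioi (0:ℝ), -(2 * x * (d x + y x / s) ^ 2) ≤ 0 := by
      refine setIntegral_nonpos measurableSet_Ioi fun x hx => ?_
      have hx0 : (0:ℝ) < x := hx
      nlinarith [sq_nonneg (d x + y x / s)]
    have hgeq : (∫ x in Ioi (0:ℝ), (-2 * x * (d x) ^ 2 - x * (y x) ^ 2))
        = (∫ x in Ioi (0:ℝ), -(2 * x * (d x + y x / s) ^ 2))
          + 2 * s * ∫ x in Ioi (0:ℝ), (x * y x * d x) := by
      rw [← integral_const_mul, ← integral_add hIsq ((hIc.const_mul (2 * s)))]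
      exact setIntegral_congr_fun measurableSet_Ioi fun x _ => key x
    rw [hgeq, hcross]
    linarith
end

section
/- For every normalized $y \in L^2[0,\infty) \cap C^2[0,\infty)$ with $\|y\|_{L^2}=1$ (and $y$, $y'$ decaying suitably at infinity), $\int_0^\infty [-2h y'(h)^2 - h y(h)^2]\,dh \le -\sqrt{2}$. -/
open MeasureTheory Set Filter

/-- Upper bound half of the variational computation: every normalized `C²` function `y`
on `[0,∞)` (with suitable decay) satisfies `∫_0^∞ [-2h y'(h)² - h y(h)²] dh ≤ -√2`. -/
theorem stmt4 (y : ℝ → ℝ) (hy : ContDiff ℝ 2 y)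
    (hL2 : IntegrableOn (fun h => (y h) ^ 2) (Ioi 0))
    (hnorm : (∫ h in Ioi (0:ℝ), (y h) ^ 2) = 1)
    (hint : IntegrableOn (fun h => -2 * h * (deriv y h) ^ 2 - h * (y h) ^ 2) (Ioi 0))
    (hcross : IntegrableOn (fun h => h * y h * deriv y h) (Ioi 0))
    (hdecay : Tendsto (fun h => h * (y h) ^ 2) atTop (nhds 0)) :
    (∫ h in Ioi (0:ℝ), (-2 * h * (deriv y h) ^ 2 - h * (y h) ^ 2)) ≤ -Real.sqrt 2 := by
  have hydiff : Differentiable ℝ y := hy.differentiable (by norm_num)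
  have hB : IntegrableOn (fun x => x * (2 * y x * deriv y x)) (Ioi 0) := by
    have heq : (fun x => x * (2 * y x * deriv y x)) = fun x => 2 * (x * y x * deriv y x) := by
      funext x; ring
    rw [heq]; exact hcross.const_mul 2
  have hderiv : ∀ x ∈ Ioi (0:ℝ), HasDerivAt (fun h => h * (y h)^2)
      ((y x)^2 + x * (2 * y x * deriv y x)) x := by
    intro x _
    have h1 : HasDerivAt (fun h : ℝ => h) 1 x := hasDerivAt_id x
    have h2 : HasDerivAt (fun h => (y h)^2) (2 * y x * deriv y x) x := by
      have := ((hydiff x).hasDerivAt).fun_pow 2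
      simpa [mul_comm, mul_assoc, mul_left_comm] using this
    simpa using h1.fun_mul h2
  have hparts : (∫ x in Ioi (0:ℝ), ((y x)^2 + x * (2 * y x * deriv y x))) = 0 := by
    have hcont : ContinuousWithinAt (fun h => h * (y h)^2) (Ici 0) 0 :=
      (continuous_id.mul (hydiff.continuous.pow 2)).continuousWithinAt
    have := integral_Ioi_of_hasDerivAt_of_tendsto hcont hderiv (hL2.add hB) hdecay
    simpa using this
  have hsplit : (∫ x in Ioi (0:ℝ), x * y x * deriv y x) = -1/2 := by
    have hadd := integral_add hL2 hB
    rw [hparts, hnorm] at hadd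
    have h2 : (∫ x in Ioi (0:ℝ), x * (2 * y x * deriv y x))
        = 2 * ∫ x in Ioi (0:ℝ), x * y x * deriv y x := by
      rw [← integral_const_mul]
      refine integral_congr_ae (Eventually.of_forall fun x => ?_)
      ring
    rw [h2] at hadd
    linarith
  have hmono : (∫ h in Ioi (0:ℝ), (-2 * h * (deriv y h) ^ 2 - h * (y h) ^ 2))
      ≤ ∫ h in Ioi (0:ℝ), (2 * Real.sqrt 2) * (h * y h * deriv y h) := by
    refine setIntegral_mono_on hint (hcross.const_mul _) measurableSet_Ioi ?_
    intro x hx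
    have hs : Real.sqrt 2 ^ 2 = 2 := Real.sq_sqrt (by norm_num)
    have expand : (Real.sqrt 2 * deriv y x + y x) ^ 2
        = 2 * deriv y x ^ 2 + 2 * Real.sqrt 2 * deriv y x * y x + y x ^ 2 := by
      rw [add_sq, mul_pow, hs]; ring
    have h0 : 0 ≤ x * (2 * deriv y x ^ 2 + 2 * Real.sqrt 2 * deriv y x * y x + y x ^ 2) :=
      mul_nonneg (mem_Ioi.mp hx).le (expand ▸ sq_nonneg _)
    nlinarith [h0]
  rw [integral_const_mul, hsplit] at hmono
  have : Real.sqrt 2 ≥ 0 := Real.sqrt_nonneg 2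
  linarith [hmono]
end
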